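/- Let V and W be finite-dimensional real inner product spaces, let J be a compatible complex structure on V, and let (e_1, …, e_n, η) be an orthonormal basis of V × W (so the 'normal' part consists of the single unit vector η). Writing x¹ for the V-component of x ∈ V × W, one has Σ_{j=1}^{n} ( ⟨e_j¹, η¹⟩² − ⟨e_j¹, J(η¹)⟩² ) = −‖η¹‖⁴. (This is the codimension-one formula used to prove the paper's Theorem 3.2 on hypersurfaces of ℂP^{m/2} × M.) -/

import Mathlib

open scoped RealInnerProductSpace

/-- Codimension-one formula used in the paper's Theorem 3.2. -/
theorem stmt_2 {V W : Type*} [NormedAddCommGroup V] [InnerProductSpace ℝ V]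
    [FiniteDimensional ℝ V] [NormedAddCommGroup W] [InnerProductSpace ℝ W]
    [FiniteDimensional ℝ W] (J : V →ₗ[ℝ] V)
    (hJiso : ∀ x y : V, ⟪J x, J y⟫ = ⟪x, y⟫)
    (hJsq : ∀ x : V, J (J x) = -x)
    {n : ℕ} (b : OrthonormalBasis (Fin n ⊕ Fin 1) ℝ (WithLp 2 (V × W))) :
    ∑ j : Fin n,
      (⟪(b (Sum.inl j)).fst, (b (Sum.inr 0)).fst⟫ ^ 2
        - ⟪(b (Sum.inl j)).fst, J ((b (Sum.inr 0)).fst)⟫ ^ 2)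
      = -‖(b (Sum.inr 0)).fst‖ ^ 4 := by
  set η : V := (b (Sum.inr 0)).fst with hη
  -- key Parseval identity
  have key : ∀ v : V, ∑ j : Fin n, ⟪(b (Sum.inl j)).fst, v⟫ ^ 2
      = ‖v‖ ^ 2 - ⟪η, v⟫ ^ 2 := by
    intro v
    set u : WithLp 2 (V × W) := WithLp.toLp 2 (v, (0 : W)) with hu
    have huu : ⟪u, u⟫ = ‖v‖ ^ 2 := by
      simp [hu, real_inner_self_eq_norm_sq]
    have hcomp : ∀ i, ⟪u, b i⟫ = ⟪(b i).fst, v⟫ := by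
      intro i
      simp [hu, real_inner_comm]
    have := b.sum_inner_mul_inner u u
    rw [Fintype.sum_sum_type] at this
    simp only [Fin.sum_univ_one] at this
    have hbη : ⟪u, b (Sum.inr 0)⟫ = ⟪η, v⟫ := by
      simp [hu, hη, real_inner_comm]
    rw [huu] at this
    have h2 : ∀ i, ⟪u, b i⟫ * ⟪b i, u⟫ = ⟪u, b i⟫ ^ 2 := by
      intro i; rw [real_inner_comm (b i) u]; ring
    calc ∑ j : Fin n, ⟪(b (Sum.inl j)).fst, v⟫ ^ 2
        = ∑ j : Fin n, ⟪u, b (Sum.inl j)⟫ * ⟪b (Sum.inl j), u⟫ := by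
          refine Finset.sum_congr rfl fun j _ => ?_
          rw [h2, hcomp]
      _ = ‖v‖ ^ 2 - ⟪u, b (Sum.inr 0)⟫ * ⟪b (Sum.inr 0), u⟫ := by linarith [this]
      _ = ‖v‖ ^ 2 - ⟪η, v⟫ ^ 2 := by rw [h2, hbη]
  have hJη : ⟪η, J η⟫ = 0 := by
    have h1 : ⟪J η, J (J η)⟫ = ⟪η, J η⟫ := hJiso η (J η)
    rw [hJsq, inner_neg_right, real_inner_comm] at h1
    linarith
  have hJn : ‖J η‖ ^ 2 = ‖η‖ ^ 2 := by
    rw [← real_inner_self_eq_norm_sq, ← real_inner_self_eq_norm_sq, hJiso]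
  have hηη : ⟪η, η⟫ = ‖η‖ ^ 2 := real_inner_self_eq_norm_sq η
  rw [Finset.sum_sub_distrib, key η, key (J η), hJn, hJη, hηη]
  ring
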